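/- Let m₁, m₂ ≥ 2 be integers, q, s ∈ (0,1), ρ ∈ [−1,1], and δ ∈ {−1,1}. Then the double sum over k ∈ {0,…,m₁−1} and l ∈ {0,…,m₂−1} of (q^k + q^{m₁−k})(s^l + s^{m₂−l})·(1 + ρ·cos(2πk/m₁ − δ·2πl/m₂)) equals (1−q^{m₁})(1−s^{m₂})(1+q)(1+s) · [ 1/((1−q)(1−s)) + ρ·(1−q)(1−s)/((q² − 2q·cos(2π/m₁) + 1)(s² − 2s·cos(2π/m₂) + 1)) ]. -/

import Mathlib

open Real Finset


lemma sum_exp_eq (m : ℕ) (hm : 2 ≤ m) (q : ℝ) (hq0 : 0 < q) (hq1 : q < 1) :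
    ∑ k ∈ Finset.range m, ((q ^ k + q ^ (m - k) : ℝ) : ℂ) *
        Complex.exp ((2 * π * k / m : ℝ) * Complex.I)
      = (((1 - q ^ m) * (1 - q ^ 2) / (q ^ 2 - 2 * q * Real.cos (2 * π / m) + 1) : ℝ) : ℂ) := by
  have hm0 : (m : ℝ) ≠ 0 := by positivity
  have hm0' : (m : ℂ) ≠ 0 := by exact_mod_cast hm0
  set θ : ℝ := 2 * π / m with hθ
  set E : ℂ := Complex.exp ((θ : ℝ) * Complex.I) with hEdef
  have habsE : ‖E‖ = 1 := Complex.norm_exp_ofReal_mul_I θ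
  have hq0' : (q : ℂ) ≠ 0 := by exact_mod_cast hq0.ne'
  have hEm : E ^ m = 1 := by
    rw [hEdef, ← Complex.exp_nat_mul]
    have : (m : ℂ) * ((θ : ℝ) * Complex.I) = 2 * (π : ℂ) * Complex.I := by
      rw [hθ]; push_cast; field_simp
    rw [this, Complex.exp_two_pi_mul_I]
  have hterm : ∀ k ∈ Finset.range m,
      ((q ^ k + q ^ (m - k) : ℝ) : ℂ) * Complex.exp ((2 * π * k / m : ℝ) * Complex.I)
        = ((q : ℂ) * E) ^ k + (q : ℂ) ^ m * (E * (q : ℂ)⁻¹) ^ k := by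
    intro k hk
    have hk' : k ≤ m := (Finset.mem_range.mp hk).le
    have h1 : ((2 * π * k / m : ℝ) : ℂ) * Complex.I = (k : ℂ) * ((θ : ℝ) * Complex.I) := by
      rw [hθ]; push_cast; field_simp
    rw [h1, Complex.exp_nat_mul, ← hEdef]
    have h2 : (q : ℂ) ^ (m - k) = (q : ℂ) ^ m * ((q : ℂ) ^ k)⁻¹ := pow_sub₀ _ hq0' hk'
    push_cast
    rw [h2, mul_pow, mul_pow, inv_pow]
    ring
  rw [Finset.sum_congr rfl hterm, Finset.sum_add_distrib, ← Finset.mul_sum]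
  have hqE : (q : ℂ) * E ≠ 1 := by
    intro h
    have h2 := congrArg norm h
    rw [norm_mul, habsE, Complex.norm_real, Real.norm_eq_abs, abs_of_pos hq0, mul_one, norm_one] at h2
    linarith
  have hEq : E * (q : ℂ)⁻¹ ≠ 1 := by
    intro h
    have h' : E = (q : ℂ) := by field_simp at h; exact h
    have h2 := congrArg norm h'
    rw [habsE, Complex.norm_real, Real.norm_eq_abs, abs_of_pos hq0] at h2
    linarith
  rw [geom_sum_eq hqE, geom_sum_eq hEq]
  set c : ℂ := (Real.cos θ : ℂ) with hc
  set sn : ℂ := (Real.sin θ : ℂ) with hsn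
  have hc2 : c ^ 2 + sn ^ 2 = 1 := by
    rw [hc, hsn]; norm_cast; rw [add_comm]; exact Real.sin_sq_add_cos_sq θ
  have hE : E = c + sn * Complex.I := by
    rw [hEdef, Complex.exp_mul_I, hc, hsn, Complex.ofReal_cos, Complex.ofReal_sin]
  have hE2 : E ^ 2 = 2 * c * E - 1 := by
    rw [hE]
    have hI : Complex.I ^ 2 = -1 := Complex.I_sq
    linear_combination (sn^2) * hI - hc2
  have h1' : 1 - (q : ℂ) * E ≠ 0 := sub_ne_zero.mpr (Ne.symm hqE)
  have hEq' : E ≠ (q : ℂ) := by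
    intro h
    exact hEq (by rw [h]; field_simp)
  have h2' : E - (q : ℂ) ≠ 0 := sub_ne_zero.mpr hEq'
  have hD : q ^ 2 - 2 * q * Real.cos θ + 1 ≠ 0 := by
    have := Real.cos_le_one θ
    nlinarith
  have hDc : (q : ℂ) ^ 2 - 2 * q * c + 1 ≠ 0 := by
    rw [hc]
    intro h
    apply hD
    exact_mod_cast h
  have hcast : (((1 - q ^ m) * (1 - q ^ 2) / (q ^ 2 - 2 * q * Real.cos θ + 1) : ℝ) : ℂ)
      = (1 - (q : ℂ) ^ m) * (1 - (q : ℂ) ^ 2) / ((q : ℂ) ^ 2 - 2 * q * c + 1) := by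
    rw [hc]; push_cast; ring
  rw [hcast]
  rw [mul_pow, hEm, mul_pow, inv_pow, hEm]
  have hA : ((q : ℂ) ^ m * 1 - 1) / ((q : ℂ) * E - 1) = (1 - (q : ℂ) ^ m) / (1 - (q : ℂ) * E) := by
    rw [mul_one, div_eq_div_iff (sub_ne_zero.mpr hqE) h1']; ring
  have hqm0 : ((q : ℂ)) ^ m ≠ 0 := pow_ne_zero _ hq0'
  have hB : (q : ℂ) ^ m * ((1 * ((q : ℂ) ^ m)⁻¹ - 1) / (E * (q : ℂ)⁻¹ - 1))
      = (q : ℂ) * (1 - (q : ℂ) ^ m) / (E - (q : ℂ)) := by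
    field_simp
  rw [hA, hB, div_add_div _ _ h1' h2', div_eq_div_iff (mul_ne_zero h1' h2') hDc]
  linear_combination (q : ℂ) * (1 - (q : ℂ) ^ m) * (1 - (q : ℂ) ^ 2) * hE2

lemma sum_cos_eq (m : ℕ) (hm : 2 ≤ m) (q : ℝ) (hq0 : 0 < q) (hq1 : q < 1) :
    ∑ k ∈ Finset.range m, (q ^ k + q ^ (m - k)) * Real.cos (2 * π * k / m)
      = (1 - q ^ m) * (1 - q ^ 2) / (q ^ 2 - 2 * q * Real.cos (2 * π / m) + 1) := by
  have h := congrArg Complex.re (sum_exp_eq m hm q hq0 hq1)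
  rw [Complex.re_sum] at h
  simpa only [Complex.mul_re, Complex.ofReal_re, Complex.ofReal_im,
    Complex.exp_ofReal_mul_I_re, Complex.exp_ofReal_mul_I_im, zero_mul, mul_zero,
    sub_zero, add_zero, zero_add] using h

lemma sum_sin_eq (m : ℕ) (hm : 2 ≤ m) (q : ℝ) (hq0 : 0 < q) (hq1 : q < 1) :
    ∑ k ∈ Finset.range m, (q ^ k + q ^ (m - k)) * Real.sin (2 * π * k / m) = 0 := by
  have h := congrArg Complex.im (sum_exp_eq m hm q hq0 hq1)
  rw [Complex.im_sum] at h
  simpa only [Complex.mul_im, Complex.ofReal_re, Complex.ofReal_im,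
    Complex.exp_ofReal_mul_I_re, Complex.exp_ofReal_mul_I_im, zero_mul, mul_zero,
    sub_zero, add_zero, zero_add] using h

lemma sum_plain_eq (m : ℕ) (q : ℝ) (hq0 : 0 < q) (hq1 : q < 1) :
    ∑ k ∈ Finset.range m, (q ^ k + q ^ (m - k)) = (1 - q ^ m) * (1 + q) / (1 - q) := by
  have hq1' : q ≠ 1 := ne_of_lt hq1
  have h1q : 1 - q ≠ 0 := sub_ne_zero.mpr (Ne.symm hq1')
  rw [Finset.sum_add_distrib, geom_sum_eq hq1']
  have h2 : ∑ k ∈ Finset.range m, q ^ (m - k) = ∑ k ∈ Finset.range m, q ^ (k + 1) := by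
    rw [← Finset.sum_range_reflect]
    apply Finset.sum_congr rfl
    intro j hj
    congr 1
    have := Finset.mem_range.mp hj
    omega
  rw [h2]
  have h3 : ∑ k ∈ Finset.range m, q ^ (k + 1) = q * ∑ k ∈ Finset.range m, q ^ k := by
    rw [Finset.mul_sum]
    exact Finset.sum_congr rfl fun k _ => by ring
  rw [h3, geom_sum_eq hq1']
  have hq1'' : q - 1 ≠ 0 := sub_ne_zero.mpr hq1'
  field_simp
  ring

lemma cos_pm (δ x y : ℝ) (hδ : δ = 1 ∨ δ = -1) :
    Real.cos (x - δ * y) = Real.cos x * Real.cos y + δ * (Real.sin x * Real.sin y) := by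
  rcases hδ with h | h <;> subst h <;>
    simp [Real.cos_sub, Real.cos_add, sub_eq_add_neg] <;> ring

theorem bwg_normalization (m₁ m₂ : ℕ) (hm₁ : 2 ≤ m₁) (hm₂ : 2 ≤ m₂)
    (q s ρ δ : ℝ) (hq0 : 0 < q) (hq1 : q < 1) (hs0 : 0 < s) (hs1 : s < 1)
    (hρ₁ : -1 ≤ ρ) (hρ₂ : ρ ≤ 1) (hδ : δ = 1 ∨ δ = -1) :
    (∑ k ∈ Finset.range m₁, ∑ l ∈ Finset.range m₂,
        (q ^ k + q ^ (m₁ - k)) * (s ^ l + s ^ (m₂ - l)) *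
          (1 + ρ * Real.cos (2 * π * k / m₁ - δ * (2 * π * l / m₂)))) =
      (1 - q ^ m₁) * (1 - s ^ m₂) * (1 + q) * (1 + s) *
        (1 / ((1 - q) * (1 - s)) +
          ρ * (1 - q) * (1 - s) /
            ((q ^ 2 - 2 * q * Real.cos (2 * π / m₁) + 1) *
              (s ^ 2 - 2 * s * Real.cos (2 * π / m₂) + 1))) := by
  set SB := (1 - s ^ m₂) * (1 + s) / (1 - s) with hSBd
  set CB := (1 - s ^ m₂) * (1 - s ^ 2) / (s ^ 2 - 2 * s * Real.cos (2 * π / m₂) + 1) with hCBd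
  have hSB := sum_plain_eq m₂ s hs0 hs1
  have hCB := sum_cos_eq m₂ hm₂ s hs0 hs1
  have hSB0 := sum_sin_eq m₂ hm₂ s hs0 hs1
  have inner : ∀ k ∈ Finset.range m₁,
      (∑ l ∈ Finset.range m₂,
        (q ^ k + q ^ (m₁ - k)) * (s ^ l + s ^ (m₂ - l)) *
          (1 + ρ * Real.cos (2 * π * k / m₁ - δ * (2 * π * l / m₂))))
      = (q ^ k + q ^ (m₁ - k)) * SB
        + ((q ^ k + q ^ (m₁ - k)) * Real.cos (2 * π * k / m₁)) * (ρ * CB) := by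
    intro k _
    have hpt : ∀ l ∈ Finset.range m₂,
        (q ^ k + q ^ (m₁ - k)) * (s ^ l + s ^ (m₂ - l)) *
          (1 + ρ * Real.cos (2 * π * k / m₁ - δ * (2 * π * l / m₂)))
        = (q ^ k + q ^ (m₁ - k)) * (s ^ l + s ^ (m₂ - l))
          + (ρ * ((q ^ k + q ^ (m₁ - k)) * Real.cos (2 * π * k / m₁)))
              * ((s ^ l + s ^ (m₂ - l)) * Real.cos (2 * π * l / m₂))
          + (ρ * δ * ((q ^ k + q ^ (m₁ - k)) * Real.sin (2 * π * k / m₁)))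
              * ((s ^ l + s ^ (m₂ - l)) * Real.sin (2 * π * l / m₂)) := by
      intro l _
      rw [cos_pm δ _ _ hδ]
      ring
    rw [Finset.sum_congr rfl hpt, Finset.sum_add_distrib, Finset.sum_add_distrib,
      ← Finset.mul_sum, ← Finset.mul_sum, ← Finset.mul_sum, hSB, hCB, hSB0, ← hSBd, ← hCBd]
    ring
  rw [Finset.sum_congr rfl inner, Finset.sum_add_distrib, ← Finset.sum_mul, ← Finset.sum_mul,
    sum_plain_eq m₁ q hq0 hq1, sum_cos_eq m₁ hm₁ q hq0 hq1, hSBd, hCBd]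
  have h1q : 1 - q ≠ 0 := sub_ne_zero.mpr (ne_of_lt hq1).symm
  have h1s : 1 - s ≠ 0 := sub_ne_zero.mpr (ne_of_lt hs1).symm
  have hDq : q ^ 2 - 2 * q * Real.cos (2 * π / m₁) + 1 ≠ 0 := by
    have := Real.cos_le_one (2 * π / m₁); nlinarith
  have hDs : s ^ 2 - 2 * s * Real.cos (2 * π / m₂) + 1 ≠ 0 := by
    have := Real.cos_le_one (2 * π / m₂); nlinarith
  field_simp
  ring
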